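/- Let M, N, N_T, N_R be positive integers with N = M and N_T ≥ N_R ≥ 2. Then for every (μ_R, μ_T) ∈ R1 ∪ R2, the achievable NDT expression is within a factor of 2 of the lower bound: τ_gen(μ_R, μ_T) ≤ 2 · max{ (1/N)(1 − μ_R), max_{s ∈ {1,...,N_R}} (s/(N_T·M))(1 − s·μ_R) }. -/
import Mathlib


open Finset

/-- The DoF per user `d_{01}` of the `N_T × N_R` MIMO X channel:
`d_{01} = min{M N_T/N_R, q M N_T/(N_T + q N_R − q)}` with `q = ⌊N/M⌋` if `N ≥ M`, and
`d_{01} = min{N, q N N_T/(q N_T + N_R − q)}` with `q = ⌊M/N⌋` if `N < M`. -/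
noncomputable def d01gen (M N NT NR : ℕ) : ℝ :=
  if M ≤ N then
    min ((M : ℝ)*NT/NR) (((N/M : ℕ) : ℝ)*M*NT/((NT : ℝ) + ((N/M : ℕ) : ℝ)*NR - ((N/M : ℕ) : ℝ)))
  else
    min (N : ℝ) (((M/N : ℕ) : ℝ)*N*NT/(((M/N : ℕ) : ℝ)*NT + (NR : ℝ) - ((M/N : ℕ) : ℝ)))

/-- The DoF per user `d_{0N_T} = min{M N_T/N_R, N}` of the MIMO broadcast channel. -/
noncomputable def d0NTgen (M N NT NR : ℕ) : ℝ :=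
  min ((M : ℝ)*NT/NR) (N : ℝ)

/-- Region `R1 = {(μ_R,μ_T) : μ_R + μ_T ≥ 1, 0 ≤ μ_R ≤ 1, 0 ≤ μ_T ≤ 1}`. -/
def regR1 (muR muT : ℝ) : Prop :=
  1 ≤ muR + muT ∧ 0 ≤ muR ∧ muR ≤ 1 ∧ 0 ≤ muT ∧ muT ≤ 1

/-- Region `R2 = {(μ_R,μ_T) : μ_R + μ_T < 1, μ_R ≥ 0, μ_T ≤ 1, μ_R + N_T μ_T ≥ 1}`. -/
def regR2 (NT : ℕ) (muR muT : ℝ) : Prop :=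
  muR + muT < 1 ∧ 0 ≤ muR ∧ muT ≤ 1 ∧ 1 ≤ muR + (NT : ℝ)*muT

/-- The achievable NDT expression `τ_gen` for the `N_T × N_R` network. -/
noncomputable def tauGen (M N NT NR : ℕ) (muR muT : ℝ) : ℝ :=
  if 1 ≤ muR + muT then
    (1/d0NTgen M N NT NR) * (1 - muR)
  else
    (1/d0NTgen M N NT NR
      - ((NT : ℝ)/((NT : ℝ) - 1)) * (1/d0NTgen M N NT NR - 1/d01gen M N NT NR)) * (1 - muR)
    - ((NT : ℝ)/((NT : ℝ) - 1)) * (1/d01gen M N NT NR - 1/d0NTgen M N NT NR) * muT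

/-- The NDT lower bound for the `N_T × N_R` network:
`max{ (1/N)(1 − μ_R), max_{s∈{1,…,N_R}} (s/(N_T M))(1 − s μ_R) }`. -/
noncomputable def tauLGen (M N NT NR : ℕ) (hNR : 0 < NR) (muR : ℝ) : ℝ :=
  max ((1/(N : ℝ)) * (1 - muR))
    ((Finset.Icc 1 NR).sup' (Finset.nonempty_Icc.mpr hNR)
      (fun s => ((s : ℝ)/((NT : ℝ)*(M : ℝ))) * (1 - (s : ℝ)*muR)))

set_option maxHeartbeats 1000000 in
/-- If `N = M` and `N_T ≥ N_R ≥ 2`, then for every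
`(μ_R, μ_T) ∈ R1 ∪ R2`, the achievable NDT is within a factor `2` of the lower bound:
`τ_gen(μ_R, μ_T) ≤ 2 · max{ (1/N)(1−μ_R), max_{s∈{1,…,N_R}} (s/(N_T M))(1−s μ_R) }`. -/
theorem gen_gap_le_two (M N NT NR : ℕ) (hM : 0 < M) (hN : 0 < N)
    (hNM : N = M) (hNR : 2 ≤ NR) (hNTR : NR ≤ NT)
    (muR muT : ℝ) (h : regR1 muR muT ∨ regR2 NT muR muT) :
    tauGen M N NT NR muR muT ≤ 2 * tauLGen M N NT NR (by omega) muR := by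
  subst hNM
  have hMR : (0:ℝ) < N := by exact_mod_cast hN
  have hNRR : (2:ℝ) ≤ NR := by exact_mod_cast hNR
  have hNTR' : (NR:ℝ) ≤ NT := by exact_mod_cast hNTR
  have hNT2 : (2:ℝ) ≤ NT := le_trans hNRR hNTR'
  have hNRpos : (0:ℝ) < NR := by linarith
  have hNTpos : (0:ℝ) < NT := by linarith
  have hden : (0:ℝ) < (NT:ℝ) + NR - 1 := by linarith
  have hd0 : d0NTgen N N NT NR = (N:ℝ) := by
    unfold d0NTgen
    rw [min_eq_right]
    rw [le_div_iff₀ hNRpos]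
    nlinarith
  have hd01 : d01gen N N NT NR = (N:ℝ)*NT/((NT:ℝ) + NR - 1) := by
    unfold d01gen
    rw [if_pos (le_refl N), Nat.div_self hN]
    push_cast
    rw [min_eq_right]
    · ring_nf
    · rw [one_mul, one_mul]
      apply div_le_div_of_nonneg_left (by positivity) hNRpos
      linarith
  have hmuR1 : 1 - muR ≥ 0 := by
    rcases h with ⟨_, _, h3, _, _⟩ | ⟨h1, h2, h3, h4⟩
    · linarith
    · have hmuT : 0 < muT := by nlinarith
      linarith
  have hfirst : (1/(N:ℝ)) * (1 - muR) ≤ tauLGen N N NT NR (by omega) muR :=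
    le_max_left _ _
  have key : tauGen N N NT NR muR muT ≤ 2 * ((1/(N:ℝ)) * (1 - muR)) := by
    unfold tauGen
    rw [hd0, hd01]
    by_cases hc : 1 ≤ muR + muT
    · rw [if_pos hc]
      have hx : 0 ≤ 1/(N:ℝ) * (1 - muR) := mul_nonneg (by positivity) hmuR1
      linarith
    · rw [if_neg hc]
      have hR2 : regR2 NT muR muT := by
        rcases h with ⟨h1, _⟩ | h2
        · exact absurd h1 hc
        · exact h2
      obtain ⟨h1, h2, h3, h4⟩ := hR2
      have hE : (1/(N:ℝ)
          - ((NT : ℝ)/((NT : ℝ) - 1)) * (1/(N:ℝ) - 1/((N:ℝ)*NT/((NT:ℝ) + NR - 1)))) * (1 - muR)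
          - ((NT : ℝ)/((NT : ℝ) - 1)) * (1/((N:ℝ)*NT/((NT:ℝ) + NR - 1)) - 1/(N:ℝ)) * muT
          = (1/(N:ℝ)) * (1 - muR)
            + (((NR:ℝ)-1)/((N:ℝ)*((NT:ℝ)-1))) * (1 - muR - muT) := by
        have hNT1 : ((NT:ℝ) - 1) ≠ 0 := by linarith
        have hNne : ((N:ℝ)) ≠ 0 := ne_of_gt hMR
        have hdne : ((NT:ℝ) + NR - 1) ≠ 0 := ne_of_gt hden
        rw [one_div_div]
        field_simp
        ring
      rw [hE]
      have hpos : (0:ℝ) < (N:ℝ)*((NT:ℝ)-1) := by nlinarith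
      have hb : (NT:ℝ) * (1 - muR - muT) ≤ ((NT:ℝ)-1) * (1 - muR) := by nlinarith
      have h5 : ((NR:ℝ)-1) * (1 - muR - muT) ≤ ((NT:ℝ)-1) * (1 - muR) := by
        nlinarith [mul_le_mul_of_nonneg_left hb (by linarith : (0:ℝ) ≤ (NR:ℝ)-1),
          mul_nonneg (mul_nonneg (by linarith : (0:ℝ) ≤ (NT:ℝ)-(NR:ℝ)+1)
            (by linarith : (0:ℝ) ≤ (NT:ℝ)-1)) hmuR1]
      have hkey2 : (((NR:ℝ)-1)/((N:ℝ)*((NT:ℝ)-1))) * (1 - muR - muT)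
          ≤ (1/(N:ℝ)) * (1 - muR) := by
        rw [div_mul_eq_mul_div, div_le_iff₀ hpos]
        have hNne : ((N:ℝ)) ≠ 0 := ne_of_gt hMR
        have hthis : 1/(N:ℝ) * (1 - muR) * ((N:ℝ)*((NT:ℝ)-1)) = ((NT:ℝ)-1) * (1 - muR) := by
          rw [show 1/(N:ℝ) * (1 - muR) * ((N:ℝ)*((NT:ℝ)-1))
              = ((N:ℝ)/(N:ℝ)) * ((1 - muR)*((NT:ℝ)-1)) from by ring,
            div_self hNne, one_mul]
          ring
        rw [hthis]
        exact h5
      linarith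
  calc tauGen N N NT NR muR muT ≤ 2 * ((1/(N:ℝ)) * (1 - muR)) := key
    _ ≤ 2 * tauLGen N N NT NR (by omega) muR := by linarith
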